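/- Let A₁ be the family of 2×2 matrices indexed by pairs (i,j) ∈ {0,1}² with A₁^{01} = [[1,1],[0,0]], A₁^{10} = [[0,0],[−1,1]], and A₁^{00} = A₁^{11} = 0. Then for every N divisible by 2, the operator ∑_{i,j} Tr(A₁^{i₁j₁}⋯A₁^{i_Nj_N}) |i₁…i_N⟩⟨j₁…j_N| equals U_CZY = (∏ CZ_{k,k+1})(∏ Z_k X_k) on (ℂ²)^{⊗N} with periodic boundary conditions. -/

import Mathlib

open Matrix Finset

noncomputable section

/-- Pauli X. -/
def PX : Matrix (Fin 2) (Fin 2) ℂ := !![0, 1; 1, 0]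

/-- Pauli Z. -/
def PZ : Matrix (Fin 2) (Fin 2) ℂ := !![1, 0; 0, -1]

/-- The operator on `(ℂ²)^{⊗N}` acting as `A` on site `i` and as the identity elsewhere. -/
def site (N : ℕ) (i : Fin N) (A : Matrix (Fin 2) (Fin 2) ℂ) :
    Matrix (Fin N → Fin 2) (Fin N → Fin 2) ℂ :=
  Matrix.of fun f g =>
    A (f i) (g i) * ∏ j ∈ Finset.univ.erase i, (if f j = g j then (1 : ℂ) else 0)

/-- The product `∏_{i=1}^{N} CZ_{i,i+1}` of controlled-Z gates on adjacent qubits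
(periodic boundary conditions, site indices mod `N`); all these gates are diagonal,
so the product is the diagonal operator below. -/
def CZlayer (N : ℕ) [NeZero N] : Matrix (Fin N → Fin 2) (Fin N → Fin 2) ℂ :=
  Matrix.diagonal fun f => ∏ i : Fin N, (if f i = 1 ∧ f (i + 1) = 1 then (-1 : ℂ) else 1)

/-- The product `∏_{i=1}^{N} Z_i X_i`: the tensor product of `Z·X` on every site. -/
def ZXlayer (N : ℕ) : Matrix (Fin N → Fin 2) (Fin N → Fin 2) ℂ :=
  Matrix.of fun f g => ∏ i : Fin N, (PZ * PX) (f i) (g i)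

/-- `U_CZY = (∏_i CZ_{i,i+1})·(∏_i Z_i X_i)` on `(ℂ²)^{⊗N}`, periodic boundary conditions. -/
def UCZY (N : ℕ) [NeZero N] : Matrix (Fin N → Fin 2) (Fin N → Fin 2) ℂ :=
  CZlayer N * ZXlayer N

/-- The Hamiltonian `H = ∑_i (X_i − Z_{i−1} X_i Z_{i+1})`, indices mod `N`. -/
def ham (N : ℕ) [NeZero N] : Matrix (Fin N → Fin 2) (Fin N → Fin 2) ℂ :=
  ∑ i : Fin N, (site N i PX - site N (i - 1) PZ * site N i PX * site N (i + 1) PZ)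

/-- The matrix product operator generated by a rank-4 tensor `A` (physical dimension `d`,
bond dimension `D`) with periodic boundary conditions:
`∑_{i,j} Tr(A^{i₁j₁}⋯A^{i_Nj_N}) |i₁…i_N⟩⟨j₁…j_N|`. -/
def mpo {d D : ℕ} (A : Fin d → Fin d → Matrix (Fin D) (Fin D) ℂ) (N : ℕ) :
    Matrix (Fin N → Fin d) (Fin N → Fin d) ℂ :=
  Matrix.of fun f g => Matrix.trace (((List.finRange N).map fun k => A (f k) (g k)).prod)

/-- The bond-dimension-2 MPO tensor `A₁` with `A₁^{01} = [[1,1],[0,0]]`,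
`A₁^{10} = [[0,0],[−1,1]]` and `A₁^{00} = A₁^{11} = 0`. -/
def A1 : Fin 2 → Fin 2 → Matrix (Fin 2) (Fin 2) ℂ := fun i j =>
  if i = 0 ∧ j = 1 then !![1, 1; 0, 0]
  else if i = 1 ∧ j = 0 then !![0, 0; -1, 1]
  else 0


open Fin.NatCast

section Aux

/-- Row vectors of the rank-one factors. -/
def rr : Fin 2 → Fin 2 → ℂ := fun b j => if b = 1 ∧ j = 0 then -1 else 1

/-- `GG a b = e_a · (rr b)ᵀ`. -/
def GG (a b : Fin 2) : Matrix (Fin 2) (Fin 2) ℂ :=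
  Matrix.of fun i j => (if i = a then (1:ℂ) else 0) * rr b j

lemma GG_mul (a b c d : Fin 2) : GG a b * GG c d = rr b c • GG a d := by
  ext i j
  simp only [Matrix.mul_apply, Fin.sum_univ_two, GG, Matrix.of_apply, Matrix.smul_apply,
    smul_eq_mul]
  fin_cases c <;> simp [rr] <;> split_ifs <;> ring

lemma GG_trace (a b : Fin 2) : (GG a b).trace = rr b a := by
  simp [Matrix.trace, Matrix.diag, GG, Fin.sum_univ_two]

lemma prod_GG (F : ℕ → Fin 2) (n : ℕ) :
    (((List.range (n+1)).map (fun k => GG (F k) (F k))).prod)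
      = (∏ k ∈ Finset.range n, rr (F k) (F (k+1))) • GG (F 0) (F n) := by
  induction n with
  | zero => rw [show List.range 1 = [0] from rfl]; simp
  | succ n ih =>
      rw [List.range_succ, List.map_append, List.prod_append, ih]
      simp only [List.map_cons, List.map_nil, List.prod_cons, List.prod_nil, mul_one,
        smul_mul_assoc, GG_mul, smul_smul, Finset.prod_range_succ]

lemma A1_diag (a : Fin 2) : A1 a a = 0 := by fin_cases a <;> simp [A1]

lemma A1_ne (a b : Fin 2) (h : a ≠ b) : A1 a b = GG a a := by
  fin_cases a <;> fin_cases b <;> simp_all [A1] <;>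
    (ext i j; fin_cases i <;> fin_cases j <;> simp [GG, rr])

lemma ZX_diag (a : Fin 2) : (PZ * PX) a a = 0 := by
  fin_cases a <;> simp [PZ, PX, Matrix.mul_apply, Fin.sum_univ_two]

lemma cz_zx (a b c : Fin 2) (h : a ≠ b) :
    (if a = 1 ∧ c = 1 then (-1:ℂ) else 1) * (PZ * PX) a b = rr a c := by
  fin_cases a <;> fin_cases b <;> fin_cases c <;>
    simp_all [PZ, PX, rr, Matrix.mul_apply, Fin.sum_univ_two]

lemma map_finRange {α : Type*} (N : ℕ) [NeZero N] (f : Fin N → α) :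
    (List.finRange N).map f = (List.range N).map (fun k : ℕ => f ((k : ℕ) : Fin N)) := by
  apply List.ext_getElem
  · rw [List.length_map, List.length_map, List.length_finRange, List.length_range]
  · intro i h1 h2
    rw [List.getElem_map, List.getElem_map, List.getElem_finRange, List.getElem_range]
    congr 1
    have hiN : i < N := by simpa using h1
    rw [Fin.ext_iff, Fin.val_natCast, Fin.coe_cast]
    exact (Nat.mod_eq_of_lt hiN).symm

end Aux

/-- For every `N` divisible by 2, the MPO generated by `A₁` with periodic boundary
conditions equals `U_CZY`. -/
theorem mpo_A1_eq_UCZY (N : ℕ) [NeZero N] (hN : 2 ∣ N) :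
    mpo A1 N = UCZY N := by
  ext f g
  have hentry : UCZY N f g =
      (∏ i : Fin N, (if f i = 1 ∧ f (i+1) = 1 then (-1:ℂ) else 1)) *
        ∏ i : Fin N, (PZ * PX) (f i) (g i) := by
    rw [UCZY, CZlayer, ZXlayer, Matrix.diagonal_mul]
    rfl
  by_cases h : ∀ i, f i ≠ g i
  · set F : ℕ → Fin 2 := fun k => f ((k : ℕ) : Fin N) with hF
    obtain ⟨n, hn⟩ : ∃ n, N = n + 1 := ⟨N - 1, (Nat.succ_pred_eq_of_pos (NeZero.pos N)).symm⟩
    subst hn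
    have hlist : (List.finRange (n+1)).map (fun k => A1 (f k) (g k)) =
        (List.range (n+1)).map (fun k => GG (F k) (F k)) := by
      rw [map_finRange (n+1) (fun k => A1 (f k) (g k))]
      refine List.map_congr_left fun k _ => ?_
      exact A1_ne _ _ (h _)
    have hmpo : mpo A1 (n+1) f g =
        (∏ k ∈ Finset.range n, rr (F k) (F (k+1))) * rr (F n) (F 0) := by
      simp only [mpo, Matrix.of_apply]
      rw [hlist, prod_GG, Matrix.trace_smul, GG_trace, smul_eq_mul]
    have hR : UCZY (n+1) f g = ∏ i : Fin (n+1), rr (f i) (f (i+1)) := by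
      rw [hentry, ← Finset.prod_mul_distrib]
      exact Finset.prod_congr rfl fun i _ => cz_zx _ _ _ (h i)
    have hR2 : ∏ i : Fin (n+1), rr (f i) (f (i+1)) =
        ∏ k ∈ Finset.range (n+1), rr (F k) (F (k+1)) := by
      rw [← Fin.prod_univ_eq_prod_range (fun k => rr (F k) (F (k+1))) (n+1)]
      refine Finset.prod_congr rfl fun i _ => ?_
      congr 1
      · simp [hF, Fin.cast_val_eq_self]
      · simp only [hF]
        congr 1
        push_cast [Fin.cast_val_eq_self]
        rfl
    have hF0 : F (n+1) = F 0 := by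
      simp [hF, Fin.natCast_self]
    rw [hmpo, hR, hR2, Finset.prod_range_succ, hF0]
  · push_neg at h
    obtain ⟨i, hi⟩ := h
    have h1 : mpo A1 N f g = 0 := by
      simp only [mpo, Matrix.of_apply]
      rw [List.prod_eq_zero, Matrix.trace_zero]
      exact List.mem_map.2 ⟨i, List.mem_finRange i, by rw [hi, A1_diag]⟩
    have h2 : UCZY N f g = 0 := by
      have hz : ∏ j : Fin N, (PZ * PX) (f j) (g j) = 0 :=
        Finset.prod_eq_zero (Finset.mem_univ i) (by rw [hi, ZX_diag])
      rw [hentry, hz, mul_zero]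
    rw [h1, h2]
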